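/- arXiv:2307.15874 — 5 statements merged into one kernel-verified Lean document; each statement's English description precedes it below -/
import Mathlib

section
/- Let N, m, r be positive natural numbers, let P be a symmetric positive definite real N×N matrix, let μ ∈ (0,1), let K̄ be a real m×N matrix, and let S_{M,1}, …, S_{M,r} be real N×N matrices and S_{H,1}, …, S_{H,r} be real N×m matrices. Suppose that for each j ∈ {1, …, r} the block matrix [[(1−μ)·P, (S_{M,j} − S_{H,j}·K̄)ᵀ·P], [P·(S_{M,j} − S_{H,j}·K̄), P]] is positive definite. Then for every sequence of weight vectors (σ(k))_{k∈ℕ} with σ_j(k) ≥ 0 and Σ_{j=1}^r σ_j(k) = 1 for all k, and every x₀ ∈ ℝᴺ, the sequence defined by x_{k+1} = (M_k − H_k·K̄)·x_k, where M_k = Σ_j σ_j(k)·S_{M,j} and H_k = Σ_j σ_j(k)·S_{H,j}, converges to 0 as k → ∞. -/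
open Matrix Filter Finset

-- helper: smul of posSemidef
lemma my_posSemidef_smul {n : Type*} [Fintype n] {M : Matrix n n ℝ} (hM : M.PosSemidef) {c : ℝ}
    (hc : 0 ≤ c) : (c • M).PosSemidef := by
  refine Matrix.PosSemidef.of_dotProduct_mulVec_nonneg ?_ fun x => ?_
  · unfold Matrix.IsHermitian
    rw [conjTranspose_smul, hM.1]
    simp
  · rw [smul_mulVec, dotProduct_smul, smul_eq_mul]
    exact mul_nonneg hc (hM.dotProduct_mulVec_nonneg x)

lemma my_posSemidef_sum {n : Type*} [Fintype n] {r : ℕ} (w : Fin r → ℝ) (hw : ∀ j, 0 ≤ w j)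
    (M : Fin r → Matrix n n ℝ) (hM : ∀ j, (M j).PosSemidef) :
    (∑ j, w j • M j).PosSemidef := by
  classical
  refine Finset.sum_induction _ _ (fun a b ha hb => ha.add hb) Matrix.PosSemidef.zero ?_
  exact fun j _ => my_posSemidef_smul (hM j) (hw j)

lemma my_sum_fromBlocks {n₁ n₂ r : ℕ} (f : Fin r → Matrix (Fin n₁) (Fin n₁) ℝ)
    (g : Fin r → Matrix (Fin n₁) (Fin n₂) ℝ) (h : Fin r → Matrix (Fin n₂) (Fin n₁) ℝ)
    (i : Fin r → Matrix (Fin n₂) (Fin n₂) ℝ) :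
    ∑ j, fromBlocks (f j) (g j) (h j) (i j)
      = fromBlocks (∑ j, f j) (∑ j, g j) (∑ j, h j) (∑ j, i j) := by
  ext (a | a) (b | b) <;> simp [Matrix.sum_apply]

lemma my_coercive {n : ℕ} (hn : 0 < n) {P : Matrix (Fin n) (Fin n) ℝ} (hP : P.PosDef) :
    ∃ c > 0, ∀ v : Fin n → ℝ, c * ‖v‖ ^ 2 ≤ v ⬝ᵥ P *ᵥ v := by
  haveI : NeZero n := ⟨hn.ne'⟩
  have hcont : Continuous fun v : Fin n → ℝ => v ⬝ᵥ P *ᵥ v :=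
    continuous_id.dotProduct (continuous_const.matrix_mulVec continuous_id)
  have hsne : (Metric.sphere (0 : Fin n → ℝ) 1).Nonempty :=
    NormedSpace.sphere_nonempty.mpr zero_le_one
  obtain ⟨v₀, hv₀, hmin⟩ :=
    (isCompact_sphere (0 : Fin n → ℝ) 1).exists_isMinOn hsne hcont.continuousOn
  have hv₀norm : ‖v₀‖ = 1 := by simpa using hv₀
  have hv₀ne : v₀ ≠ 0 := by
    intro h; rw [h] at hv₀norm; simp at hv₀norm
  have hquad : ∀ (a : ℝ) (u : Fin n → ℝ), (a • u) ⬝ᵥ P *ᵥ (a • u) = a ^ 2 * (u ⬝ᵥ P *ᵥ u) := by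
    intro a u
    rw [smul_dotProduct, mulVec_smul, dotProduct_smul, smul_eq_mul, smul_eq_mul]
    ring
  refine ⟨v₀ ⬝ᵥ P *ᵥ v₀, ?_, ?_⟩
  · have := hP.dotProduct_mulVec_pos hv₀ne
    simpa using this
  · intro v
    rcases eq_or_ne v 0 with rfl | hv
    · simp
    · have hnv : ‖v‖ ≠ 0 := norm_ne_zero_iff.mpr hv
      set u : Fin n → ℝ := ‖v‖⁻¹ • v with hu
      have hunorm : u ∈ Metric.sphere (0 : Fin n → ℝ) 1 := by
        simp [hu, norm_smul, abs_of_nonneg (norm_nonneg v), inv_mul_cancel₀ hnv]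
      have hv_eq : v = ‖v‖ • u := by
        rw [hu, smul_smul, mul_inv_cancel₀ hnv, one_smul]
      have h1 : v₀ ⬝ᵥ P *ᵥ v₀ ≤ u ⬝ᵥ P *ᵥ u := hmin hunorm
      have h2 : u ⬝ᵥ P *ᵥ u = ‖v‖⁻¹ ^ 2 * (v ⬝ᵥ P *ᵥ v) := by rw [hu, hquad]
      have h3 : ‖v‖⁻¹ ^ 2 * ‖v‖ ^ 2 = 1 := by field_simp
      have h4 := mul_le_mul_of_nonneg_right h1 (sq_nonneg ‖v‖)
      rw [h2, mul_assoc, mul_comm (v ⬝ᵥ P *ᵥ v) (‖v‖ ^ 2), ← mul_assoc, h3, one_mul] at h4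
      exact h4

/-- Lemma 2: feasibility of the stability LMI at the vertices of the polytopic
overapproximation guarantees global asymptotic stability of the closed-loop
platoon system for every admissible convex-combination (delay) sequence. -/
theorem stmt_3 (N m r : ℕ) (hN : 0 < N) (hm : 0 < m) (hr : 0 < r)
    (P : Matrix (Fin N) (Fin N) ℝ) (hP : P.PosDef)
    (μ : ℝ) (hμ : 0 < μ) (hμ1 : μ < 1)
    (Kbar : Matrix (Fin m) (Fin N) ℝ)
    (SM : Fin r → Matrix (Fin N) (Fin N) ℝ)
    (SH : Fin r → Matrix (Fin N) (Fin m) ℝ)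
    (hLMI : ∀ j, (Matrix.fromBlocks ((1 - μ) • P) ((SM j - SH j * Kbar)ᵀ * P)
      (P * (SM j - SH j * Kbar)) P).PosDef) :
    ∀ σ : ℕ → Fin r → ℝ, (∀ k j, 0 ≤ σ k j) → (∀ k, (∑ j, σ k j) = 1) →
    ∀ (x₀ : Fin N → ℝ) (x : ℕ → Fin N → ℝ), x 0 = x₀ →
    (∀ k, x (k + 1) =
      ((∑ j, σ k j • SM j) - (∑ j, σ k j • SH j) * Kbar).mulVec (x k)) →
    Tendsto x atTop (nhds 0) := by
  intro σ hσ0 hσ1 x₀ x hx0 hxrec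
  haveI := hP.isUnit.invertible
  set A : ℕ → Matrix (Fin N) (Fin N) ℝ :=
    fun k => (∑ j, σ k j • SM j) - (∑ j, σ k j • SH j) * Kbar with hAdef
  have hxA : ∀ k, x (k + 1) = (A k) *ᵥ (x k) := hxrec
  have hA' : ∀ k, A k = ∑ j, σ k j • (SM j - SH j * Kbar) := by
    intro k
    simp only [hAdef, smul_sub, Finset.sum_sub_distrib]
    congr 1
    rw [Matrix.sum_mul]
    exact Finset.sum_congr rfl fun j _ => Matrix.smul_mul _ _ _
  -- block matrix for A k is a convex combination of the vertex blocks
  have hblock : ∀ k, (fromBlocks ((1 - μ) • P) ((A k)ᵀ * P) (P * A k) P).PosSemidef := by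
    intro k
    have heq : fromBlocks ((1 - μ) • P) ((A k)ᵀ * P) (P * A k) P
        = ∑ j, σ k j • fromBlocks ((1 - μ) • P) ((SM j - SH j * Kbar)ᵀ * P)
            (P * (SM j - SH j * Kbar)) P := by
      have e11 : ∑ j, σ k j • ((1 - μ) • P) = (1 - μ) • P := by
        rw [← Finset.sum_smul, hσ1 k, one_smul]
      have e12 : ∑ j, σ k j • ((SM j - SH j * Kbar)ᵀ * P) = (A k)ᵀ * P := by
        rw [hA', Matrix.transpose_sum, Matrix.sum_mul]
        exact Finset.sum_congr rfl fun j _ => by rw [Matrix.transpose_smul, Matrix.smul_mul]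
      have e21 : ∑ j, σ k j • (P * (SM j - SH j * Kbar)) = P * A k := by
        rw [hA', Matrix.mul_sum]
        exact Finset.sum_congr rfl fun j _ => (Matrix.mul_smul _ _ _).symm
      have e22 : ∑ j, σ k j • P = P := by
        rw [← Finset.sum_smul, hσ1 k, one_smul]
      simp_rw [fromBlocks_smul]
      rw [my_sum_fromBlocks, e11, e12, e21, e22]
    rw [heq]
    exact my_posSemidef_sum (σ k) (hσ0 k)
      (fun j => fromBlocks ((1 - μ) • P) ((SM j - SH j * Kbar)ᵀ * P)
        (P * (SM j - SH j * Kbar)) P) (fun j => (hLMI j).posSemidef)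
  -- Schur complement
  have hSchur : ∀ k, ((1 - μ) • P - (A k)ᵀ * P * A k).PosSemidef := by
    intro k
    have hherm : ∀ M : Matrix (Fin N) (Fin N) ℝ, Mᴴ = Mᵀ := fun M => rfl
    have hB : ((A k)ᵀ * P)ᴴ = P * A k := by
      rw [hherm, Matrix.transpose_mul, Matrix.transpose_transpose]
      congr 1
      exact hP.1
    have h2 : (fromBlocks ((1 - μ) • P) ((A k)ᵀ * P) (((A k)ᵀ * P)ᴴ) P).PosSemidef := by
      rw [hB]; exact hblock k
    have h3 := (Matrix.PosDef.fromBlocks₂₂ _ _ hP).mp h2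
    have h4 : (1 - μ) • P - (A k)ᵀ * P * P⁻¹ * ((A k)ᵀ * P)ᴴ
        = (1 - μ) • P - (A k)ᵀ * P * A k := by
      rw [hB, Matrix.mul_inv_cancel_right_of_invertible, Matrix.mul_assoc,
        ← Matrix.mul_assoc]
    rwa [h4] at h3
  -- Lyapunov function
  set V : ℕ → ℝ := fun k => x k ⬝ᵥ P *ᵥ x k with hVdef
  have hVnonneg : ∀ k, 0 ≤ V k := by
    intro k
    have := hP.posSemidef.dotProduct_mulVec_nonneg (x k)
    simpa using this
  have hVstep : ∀ k, V (k + 1) ≤ (1 - μ) * V k := by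
    intro k
    have h := (hSchur k).dotProduct_mulVec_nonneg (x k)
    have hid : x k ⬝ᵥ ((A k)ᵀ * P * A k) *ᵥ x k
        = (A k *ᵥ x k) ⬝ᵥ P *ᵥ (A k *ᵥ x k) := by
      rw [← Matrix.mulVec_mulVec, ← Matrix.mulVec_mulVec, Matrix.dotProduct_mulVec,
        Matrix.vecMul_transpose]
    rw [show star (x k) = x k from rfl, Matrix.sub_mulVec, dotProduct_sub,
      smul_mulVec, dotProduct_smul, smul_eq_mul, hid] at h
    have : V (k + 1) = (A k *ᵥ x k) ⬝ᵥ P *ᵥ (A k *ᵥ x k) := by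
      rw [hVdef]; simp only []; rw [hxA k]
    linarith
  have hμ' : 0 ≤ 1 - μ := by linarith
  have hVpow : ∀ k, V k ≤ (1 - μ) ^ k * V 0 := by
    intro k
    induction k with
    | zero => simp
    | succ n ih =>
      calc V (n + 1) ≤ (1 - μ) * V n := hVstep n
        _ ≤ (1 - μ) * ((1 - μ) ^ n * V 0) := mul_le_mul_of_nonneg_left ih hμ'
        _ = (1 - μ) ^ (n + 1) * V 0 := by ring
  obtain ⟨c, hc, hcoer⟩ := my_coercive hN hP
  have hbound : ∀ k, ‖x k‖ ^ 2 ≤ (1 - μ) ^ k * (V 0 / c) := by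
    intro k
    have h1 : c * ‖x k‖ ^ 2 ≤ V k := hcoer (x k)
    have h2 := hVpow k
    rw [show (1 - μ) ^ k * (V 0 / c) = ((1 - μ) ^ k * V 0) / c by ring, le_div_iff₀ hc]
    nlinarith
  have hgeo : Tendsto (fun k => (1 - μ) ^ k * (V 0 / c)) atTop (nhds 0) := by
    have := (tendsto_pow_atTop_nhds_zero_of_lt_one hμ' (by linarith)).mul_const (V 0 / c)
    simpa using this
  have hsq : Tendsto (fun k => ‖x k‖ ^ 2) atTop (nhds 0) :=
    squeeze_zero (fun k => by positivity) hbound hgeo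
  have hnorm : Tendsto (fun k => ‖x k‖) atTop (nhds 0) := by
    have hcomp := (Real.continuous_sqrt.tendsto 0).comp hsq
    rw [Real.sqrt_zero] at hcomp
    refine hcomp.congr fun k => ?_
    simp [Function.comp, Real.sqrt_sq (norm_nonneg _)]
  exact tendsto_zero_iff_norm_tendsto_zero.mpr hnorm
end

section
/- Let p ≥ 1 and set N = 3 + p. Let r be a positive natural number and let S_{M,1}, …, S_{M,r} be real N×N matrices and S_{H,1}, …, S_{H,r} be real N×1 matrices. Suppose there exist a symmetric positive definite real N×N matrix 𝒲, a real 1×3 matrix 𝒴, a real N×N matrix 𝒵 with block lower-triangular structure 𝒵 = [[𝒵₁, 0], [𝒵₂, 𝒵₃]] where 𝒵₁ is 3×3, and a scalar μ ∈ (0,1), such that for each j ∈ {1, …, r} the block matrix [[𝒵 + 𝒵ᵀ − 𝒲, 𝒵ᵀ·S_{M,j}ᵀ − [𝒴 0]ᵀ·S_{H,j}ᵀ], [S_{M,j}·𝒵 − S_{H,j}·[𝒴 0], (1−μ)·𝒲]] is positive definite, where [𝒴 0] denotes the 1×N matrix whose first three columns are 𝒴 and remaining columns are zero. Then 𝒵₁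 is invertible, and setting K = 𝒴·𝒵₁⁻¹ and K̄ = [K 0] ∈ ℝ^{1×N}, for every sequence of weight vectors (σ(k))_{k∈ℕ} with σ_j(k) ≥ 0 and Σ_{j=1}^r σ_j(k) = 1 for all k, and every x₀ ∈ ℝᴺ, the sequence x_{k+1} = (M_k − H_k·K̄)·x_k, where M_k = Σ_j σ_j(k)·S_{M,j} and H_k = Σ_j σ_j(k)·S_{H,j}, converges to 0 as k → ∞. -/
open Matrix Filter Finset

private lemma ct_eq_t {m n : Type*} (M : Matrix m n ℝ) : Mᴴ = Mᵀ :=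
  Matrix.conjTranspose_eq_transpose_of_trivial M

private lemma star_pi {n : Type*} (x : n → ℝ) : star x = x := by
  funext i; simp

private lemma pd_quad {n : Type*} [Fintype n] {M : Matrix n n ℝ} (h : M.PosDef)
    {x : n → ℝ} (hx : x ≠ 0) : 0 < x ⬝ᵥ M *ᵥ x := by
  simpa [star_pi] using h.dotProduct_mulVec_pos hx

private lemma psd_quad {n : Type*} [Fintype n] {M : Matrix n n ℝ} (h : M.PosSemidef)
    (x : n → ℝ) : 0 ≤ x ⬝ᵥ M *ᵥ x := by
  simpa [star_pi] using h.dotProduct_mulVec_nonneg x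

private lemma quad_transpose {n : Type*} [Fintype n] (M : Matrix n n ℝ) (v : n → ℝ) :
    v ⬝ᵥ Mᵀ *ᵥ v = v ⬝ᵥ M *ᵥ v := by
  rw [Matrix.dotProduct_mulVec, Matrix.vecMul_transpose, dotProduct_comm]

private lemma sum_mulVec' {ι n m : Type*} [Fintype m] (s : Finset ι)
    (A : ι → Matrix n m ℝ) (x : m → ℝ) :
    (∑ j ∈ s, A j) *ᵥ x = ∑ j ∈ s, A j *ᵥ x := by
  funext i
  simp only [Matrix.mulVec, dotProduct, Matrix.sum_apply, Finset.sum_apply,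
    Finset.sum_mul]
  rw [Finset.sum_comm]

private lemma conj_quad {n m : Type*} [Fintype n] [Fintype m]
    (M : Matrix n n ℝ) (N : Matrix n m ℝ) (x : m → ℝ) :
    x ⬝ᵥ (Nᵀ * M * N) *ᵥ x = (N *ᵥ x) ⬝ᵥ M *ᵥ (N *ᵥ x) := by
  rw [Matrix.mul_assoc, ← Matrix.mulVec_mulVec, ← Matrix.mulVec_mulVec,
    Matrix.dotProduct_mulVec x, Matrix.vecMul_transpose]

private lemma posDef_conj {n : Type*} [Fintype n] [DecidableEq n] {M N : Matrix n n ℝ}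
    (hM : M.PosDef) (hN : IsUnit N.det) : (Nᵀ * M * N).PosDef := by
  refine Matrix.PosDef.of_dotProduct_mulVec_pos ?_ ?_
  · have h := hM.1
    rw [Matrix.IsHermitian, ct_eq_t] at h ⊢
    rw [Matrix.transpose_mul, Matrix.transpose_mul, Matrix.transpose_transpose, h,
      Matrix.mul_assoc]
  · intro x hx
    have hx' : N *ᵥ x ≠ 0 := by
      intro h0
      apply hx
      have : N⁻¹ *ᵥ (N *ᵥ x) = x := by
        rw [Matrix.mulVec_mulVec, Matrix.nonsing_inv_mul _ hN, Matrix.one_mulVec]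
      rw [h0, Matrix.mulVec_zero] at this
      exact this.symm
    have h := pd_quad hM hx'
    rw [star_pi, conj_quad]
    exact h

private lemma psd_corner {m n : Type*} [Fintype m] [Fintype n] {D : Matrix m m ℝ}
    (hD : D.PosSemidef) :
    (Matrix.fromBlocks D 0 0 (0 : Matrix n n ℝ)).PosSemidef := by
  refine Matrix.PosSemidef.of_dotProduct_mulVec_nonneg ?_ ?_
  · have h := hD.1
    rw [Matrix.IsHermitian, ct_eq_t] at h ⊢
    rw [Matrix.fromBlocks_transpose, h]
    simp
  · intro x
    rw [star_pi]
    have hx : x = Sum.elim (x ∘ Sum.inl) (x ∘ Sum.inr) := (Sum.elim_comp_inl_inr x).symm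
    rw [hx, Matrix.fromBlocks_mulVec, sumElim_dotProduct_sumElim]
    simpa using psd_quad hD (x ∘ Sum.inl)

private lemma sum_fromBlocks {ι n m o l : Type*} (s : Finset ι)
    (A : ι → Matrix n l ℝ) (B : ι → Matrix n m ℝ) (C : ι → Matrix o l ℝ)
    (D : ι → Matrix o m ℝ) :
    ∑ i ∈ s, Matrix.fromBlocks (A i) (B i) (C i) (D i) =
      Matrix.fromBlocks (∑ i ∈ s, A i) (∑ i ∈ s, B i) (∑ i ∈ s, C i) (∑ i ∈ s, D i) := by
  ext (i | i) (j | j) <;> simp [Matrix.sum_apply]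

private lemma dotProduct_sum' {ι n : Type*} [Fintype n] (s : Finset ι) (x : n → ℝ)
    (f : ι → n → ℝ) : x ⬝ᵥ ∑ j ∈ s, f j = ∑ j ∈ s, x ⬝ᵥ f j := by
  simp only [dotProduct, Finset.sum_apply, Finset.mul_sum]
  exact Finset.sum_comm

private lemma conv_posDef {n r : Type*} [Fintype n] [Fintype r] {L : r → Matrix n n ℝ}
    (hL : ∀ j, (L j).PosDef) {s : r → ℝ} (hs : ∀ j, 0 ≤ s j) (hsum : ∑ j, s j = 1) :
    (∑ j, s j • L j).PosDef := by
  refine Matrix.PosDef.of_dotProduct_mulVec_pos ?_ ?_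
  · rw [Matrix.IsHermitian, Matrix.conjTranspose_sum]
    exact Finset.sum_congr rfl fun j _ => by
      rw [Matrix.conjTranspose_smul, (hL j).1]; simp
  · intro x hx
    rw [star_pi, sum_mulVec', dotProduct_sum']
    obtain ⟨j₀, hj₀⟩ : ∃ j, 0 < s j := by
      by_contra h
      push_neg at h
      have : ∑ j, s j ≤ 0 := Finset.sum_nonpos fun j _ => h j
      rw [hsum] at this; linarith
    refine Finset.sum_pos' (fun j _ => ?_) ⟨j₀, Finset.mem_univ _, ?_⟩
    · rw [Matrix.smul_mulVec, dotProduct_smul]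
      exact smul_nonneg (hs j) (psd_quad (hL j).posSemidef x)
    · rw [Matrix.smul_mulVec, dotProduct_smul]
      exact smul_pos hj₀ (pd_quad (hL j₀) hx)

private lemma pd_smul {n : Type*} [Fintype n] {M : Matrix n n ℝ} (hM : M.PosDef)
    {c : ℝ} (hc : 0 < c) : (c • M).PosDef := by
  refine Matrix.PosDef.of_dotProduct_mulVec_pos ?_ ?_
  · rw [Matrix.IsHermitian, Matrix.conjTranspose_smul, hM.1]; simp
  · intro x hx
    rw [star_pi, Matrix.smul_mulVec, dotProduct_smul]
    exact smul_pos hc (pd_quad hM hx)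

private lemma quad_lower_bound {n : Type*} [Fintype n] [DecidableEq n] [Nonempty n]
    {P : Matrix n n ℝ} (hP : P.PosDef) :
    ∃ m > 0, ∀ x : n → ℝ, m * ‖x‖ ^ 2 ≤ x ⬝ᵥ P *ᵥ x := by
  have hf : Continuous fun x : n → ℝ => x ⬝ᵥ P *ᵥ x :=
    continuous_id.dotProduct (continuous_const.matrix_mulVec continuous_id)
  have hco : IsCompact (Metric.sphere (0 : n → ℝ) 1) := isCompact_sphere 0 1
  have hne : (Metric.sphere (0 : n → ℝ) 1).Nonempty := by
    obtain ⟨x, hx⟩ := exists_norm_eq (n → ℝ) (le_of_lt (one_pos : (0:ℝ) < 1))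
    exact ⟨x, mem_sphere_zero_iff_norm.mpr hx⟩
  obtain ⟨x₀, hx₀mem, hx₀min⟩ := hco.exists_isMinOn hne hf.continuousOn
  have hx₀ : ‖x₀‖ = 1 := mem_sphere_zero_iff_norm.mp hx₀mem
  have hx₀ne : x₀ ≠ 0 := by
    intro h; rw [h, norm_zero] at hx₀; norm_num at hx₀
  refine ⟨x₀ ⬝ᵥ P *ᵥ x₀, pd_quad hP hx₀ne, fun x => ?_⟩
  by_cases hx : x = 0
  · simp [hx]
  · have hp2 : (0:ℝ) < ‖x‖ := norm_pos_iff.mpr hx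
    have hmem : ‖x‖⁻¹ • x ∈ Metric.sphere (0 : n → ℝ) 1 := by
      rw [mem_sphere_zero_iff_norm, norm_smul, norm_inv, norm_norm]
      field_simp
    have h1 := hx₀min hmem
    have hq : (‖x‖⁻¹ • x) ⬝ᵥ P *ᵥ (‖x‖⁻¹ • x) = ‖x‖⁻¹ * (‖x‖⁻¹ * (x ⬝ᵥ P *ᵥ x)) := by
      rw [Matrix.mulVec_smul, smul_dotProduct, dotProduct_smul]
      simp [smul_eq_mul]
    simp only [Set.mem_setOf_eq] at h1
    rw [hq] at h1
    calc x₀ ⬝ᵥ P *ᵥ x₀ * ‖x‖ ^ 2 ≤ ‖x‖⁻¹ * (‖x‖⁻¹ * (x ⬝ᵥ P *ᵥ x)) * ‖x‖ ^ 2 :=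
          mul_le_mul_of_nonneg_right h1 (by positivity)
      _ = x ⬝ᵥ P *ᵥ x * (‖x‖⁻¹ * ‖x‖) * (‖x‖⁻¹ * ‖x‖) := by ring
      _ = x ⬝ᵥ P *ᵥ x := by rw [inv_mul_cancel₀ hp2.ne']; ring

private lemma key_step {n : Type*} [Fintype n] [DecidableEq n]
    {Z W M : Matrix n n ℝ} {Yb Kb : Matrix (Fin 1) n ℝ} {H : Matrix n (Fin 1) ℝ} {μ : ℝ}
    (hW : W.PosDef) (h1μ : 0 < 1 - μ) (hZu : IsUnit Z.det) (hKZ : Kb * Z = Yb)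
    (hL : (Matrix.fromBlocks (Z + Zᵀ - W) (Zᵀ * Mᵀ - Ybᵀ * Hᵀ) (M * Z - H * Yb)
      ((1 - μ) • W)).PosDef)
    (y : n → ℝ) :
    ((M - H * Kb) *ᵥ y) ⬝ᵥ W⁻¹ *ᵥ ((M - H * Kb) *ᵥ y) ≤ (1 - μ) * (y ⬝ᵥ W⁻¹ *ᵥ y) := by
  have hWdet : IsUnit W.det := (Matrix.isUnit_iff_isUnit_det W).mp hW.isUnit
  have hWt : Wᵀ = W := by rw [← ct_eq_t]; exact hW.1
  have hWiW : W⁻¹ * W = 1 := Matrix.nonsing_inv_mul _ hWdet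
  have hWWi : W * W⁻¹ = 1 := Matrix.mul_nonsing_inv _ hWdet
  set A := M - H * Kb with hAdef
  have hAZ : M * Z - H * Yb = A * Z := by rw [hAdef, Matrix.sub_mul, Matrix.mul_assoc, hKZ]
  have h12 : Zᵀ * Mᵀ - Ybᵀ * Hᵀ = (A * Z)ᵀ := by
    calc Zᵀ * Mᵀ - Ybᵀ * Hᵀ = (M * Z)ᵀ - (H * Yb)ᵀ := by
          rw [Matrix.transpose_mul, Matrix.transpose_mul]
      _ = (M * Z - H * Yb)ᵀ := (Matrix.transpose_sub _ _).symm
      _ = (A * Z)ᵀ := by rw [hAZ]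
  rw [h12, hAZ] at hL
  have hsq : (Z + Zᵀ - W) + (Z - W)ᵀ * W⁻¹ * (Z - W) = Zᵀ * W⁻¹ * Z := by
    rw [Matrix.transpose_sub, hWt]
    rw [Matrix.sub_mul, Matrix.sub_mul, Matrix.mul_sub, Matrix.mul_sub]
    rw [hWWi, Matrix.mul_assoc Zᵀ W⁻¹ W, hWiW, Matrix.mul_one]
    simp only [Matrix.one_mul]
    abel
  have hpsd : ((Z - W)ᵀ * W⁻¹ * (Z - W)).PosSemidef := by
    have h := (hW.inv.posSemidef).conjTranspose_mul_mul_same (Z - W)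
    rwa [ct_eq_t] at h
  have hL' : (Matrix.fromBlocks (Zᵀ * W⁻¹ * Z) ((A * Z)ᵀ) (A * Z) ((1 - μ) • W)).PosDef := by
    have h := hL.add_posSemidef (psd_corner hpsd)
    have e : Matrix.fromBlocks (Z + Zᵀ - W) ((A * Z)ᵀ) (A * Z) ((1 - μ) • W) +
        Matrix.fromBlocks ((Z - W)ᵀ * W⁻¹ * (Z - W)) 0 0 0 =
        Matrix.fromBlocks (Zᵀ * W⁻¹ * Z) ((A * Z)ᵀ) (A * Z) ((1 - μ) • W) := by
      rw [Matrix.fromBlocks_add, hsq, add_zero, add_zero, add_zero]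
    rwa [e] at h
  have hZZi : Z * Z⁻¹ = 1 := Matrix.mul_nonsing_inv _ hZu
  have hcoll : ∀ B : Matrix n n ℝ, Z⁻¹ᵀ * (Zᵀ * B) = B := fun B => by
    rw [← Matrix.mul_assoc, ← Matrix.transpose_mul, hZZi, Matrix.transpose_one, Matrix.one_mul]
  have hTdet : IsUnit (Matrix.fromBlocks Z⁻¹ 0 0 (1 : Matrix n n ℝ)).det := by
    rw [Matrix.det_fromBlocks_zero₂₁, Matrix.det_one, mul_one]
    exact Matrix.isUnit_nonsing_inv_det _ hZu
  have hL'' : (Matrix.fromBlocks W⁻¹ Aᵀ A ((1 - μ) • W)).PosDef := by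
    have h := posDef_conj hL' hTdet
    have e : (Matrix.fromBlocks Z⁻¹ 0 0 (1 : Matrix n n ℝ))ᵀ *
        Matrix.fromBlocks (Zᵀ * W⁻¹ * Z) ((A * Z)ᵀ) (A * Z) ((1 - μ) • W) *
        Matrix.fromBlocks Z⁻¹ 0 0 (1 : Matrix n n ℝ) =
        Matrix.fromBlocks W⁻¹ Aᵀ A ((1 - μ) • W) := by
      simp only [Matrix.fromBlocks_transpose, Matrix.transpose_zero, Matrix.transpose_one,
        Matrix.fromBlocks_multiply, Matrix.zero_mul, Matrix.mul_zero, Matrix.mul_one,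
        Matrix.one_mul, add_zero, zero_add, Matrix.transpose_mul, Matrix.transpose_transpose,
        Matrix.mul_assoc, hZZi, hcoll]
    rwa [e] at h
  have hD : ((1 - μ) • W).PosDef := pd_smul hW h1μ
  haveI := Matrix.invertibleOfIsUnitDet _ ((Matrix.isUnit_iff_isUnit_det _).mp hD.isUnit)
  have hps : (Matrix.fromBlocks W⁻¹ Aᵀ ((Aᵀ)ᴴ) ((1 - μ) • W)).PosSemidef := by
    rw [ct_eq_t, Matrix.transpose_transpose]; exact hL''.posSemidef
  have hschur := (Matrix.PosDef.fromBlocks₂₂ W⁻¹ Aᵀ hD).mp hps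
  rw [ct_eq_t, Matrix.transpose_transpose] at hschur
  have hinv : ((1 - μ) • W)⁻¹ = (1 - μ)⁻¹ • W⁻¹ := by
    apply Matrix.inv_eq_right_inv
    rw [Matrix.smul_mul, Matrix.mul_smul, smul_smul, mul_inv_cancel₀ h1μ.ne', one_smul, hWWi]
  rw [hinv] at hschur
  have hq := psd_quad hschur y
  rw [Matrix.sub_mulVec, dotProduct_sub] at hq
  have e2 : y ⬝ᵥ (Aᵀ * ((1 - μ)⁻¹ • W⁻¹) * A) *ᵥ y =
      (1 - μ)⁻¹ * ((A *ᵥ y) ⬝ᵥ W⁻¹ *ᵥ (A *ᵥ y)) := by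
    rw [conj_quad, Matrix.smul_mulVec, dotProduct_smul, smul_eq_mul]
  rw [e2] at hq
  have h3 : (1 - μ) * ((1 - μ)⁻¹ * ((A *ᵥ y) ⬝ᵥ W⁻¹ *ᵥ (A *ᵥ y))) =
      (A *ᵥ y) ⬝ᵥ W⁻¹ *ᵥ (A *ᵥ y) := by
    rw [← mul_assoc, mul_inv_cancel₀ h1μ.ne', one_mul]
  have h4 := mul_le_mul_of_nonneg_left (by linarith :
      (1 - μ)⁻¹ * ((A *ᵥ y) ⬝ᵥ W⁻¹ *ᵥ (A *ᵥ y)) ≤ y ⬝ᵥ W⁻¹ *ᵥ y) h1μ.le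
  rw [h3] at h4
  exact h4

/-- Theorem 1: the LMI-based controller synthesis condition at the vertices of the
polytopic overapproximation yields a structured state-feedback gain
`K̄ = [K 0]` with `K = 𝒴 𝒵₁⁻¹` rendering the origin of the uncertain
closed-loop platoon system globally asymptotically stable. -/
theorem stmt_6 (p : ℕ) (hp : 1 ≤ p) (r : ℕ) (hr : 0 < r)
    (SM : Fin r → Matrix (Fin 3 ⊕ Fin p) (Fin 3 ⊕ Fin p) ℝ)
    (SH : Fin r → Matrix (Fin 3 ⊕ Fin p) (Fin 1) ℝ)
    (W : Matrix (Fin 3 ⊕ Fin p) (Fin 3 ⊕ Fin p) ℝ) (hW : W.PosDef)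
    (Y : Matrix (Fin 1) (Fin 3) ℝ)
    (Z1 : Matrix (Fin 3) (Fin 3) ℝ) (Z2 : Matrix (Fin p) (Fin 3) ℝ)
    (Z3 : Matrix (Fin p) (Fin p) ℝ)
    (μ : ℝ) (hμ : 0 < μ) (hμ1 : μ < 1)
    (hLMI : ∀ j, (Matrix.fromBlocks
      (Matrix.fromBlocks Z1 0 Z2 Z3 + (Matrix.fromBlocks Z1 0 Z2 Z3)ᵀ - W)
      ((Matrix.fromBlocks Z1 0 Z2 Z3)ᵀ * (SM j)ᵀ -
        (Matrix.fromCols Y (0 : Matrix (Fin 1) (Fin p) ℝ))ᵀ * (SH j)ᵀ)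
      (SM j * Matrix.fromBlocks Z1 0 Z2 Z3 -
        SH j * Matrix.fromCols Y (0 : Matrix (Fin 1) (Fin p) ℝ))
      ((1 - μ) • W)).PosDef) :
    IsUnit Z1 ∧
    ∀ σ : ℕ → Fin r → ℝ, (∀ k j, 0 ≤ σ k j) → (∀ k, (∑ j, σ k j) = 1) →
    ∀ (x₀ : Fin 3 ⊕ Fin p → ℝ) (x : ℕ → Fin 3 ⊕ Fin p → ℝ), x 0 = x₀ →
    (∀ k, x (k + 1) =
      ((∑ j, σ k j • SM j) - (∑ j, σ k j • SH j) *
        Matrix.fromCols (Y * Z1⁻¹) (0 : Matrix (Fin 1) (Fin p) ℝ)).mulVec (x k)) →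
    Tendsto x atTop (nhds 0) := by
  have h1μ : (0:ℝ) < 1 - μ := by linarith
  set Z : Matrix (Fin 3 ⊕ Fin p) (Fin 3 ⊕ Fin p) ℝ := Matrix.fromBlocks Z1 0 Z2 Z3 with hZdef
  set Yb : Matrix (Fin 1) (Fin 3 ⊕ Fin p) ℝ :=
    Matrix.fromCols Y (0 : Matrix (Fin 1) (Fin p) ℝ) with hYbdef
  -- positivity of the quadratic form of Z
  have quadZ : ∀ v : Fin 3 ⊕ Fin p → ℝ, v ≠ 0 → 0 < v ⬝ᵥ Z *ᵥ v := by
    intro v hv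
    have hvne : (Sum.elim v (0 : (Fin 3 ⊕ Fin p) → ℝ)) ≠ 0 := by
      intro h0
      apply hv
      funext i
      exact congrFun h0 (Sum.inl i)
    have h := pd_quad (hLMI ⟨0, hr⟩) hvne
    rw [Matrix.fromBlocks_mulVec] at h
    simp only [Sum.elim_comp_inl, Sum.elim_comp_inr, Matrix.mulVec_zero, add_zero] at h
    rw [sumElim_dotProduct_sumElim, zero_dotProduct, add_zero] at h
    rw [Matrix.sub_mulVec, Matrix.add_mulVec, dotProduct_sub, dotProduct_add,
      quad_transpose] at h
    have hw := psd_quad hW.posSemidef v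
    linarith
  have hZu : IsUnit Z.det := by
    rw [isUnit_iff_ne_zero]
    intro hdet
    obtain ⟨v, hv, hv0⟩ := Matrix.exists_mulVec_eq_zero_iff.mpr hdet
    have h := quadZ v hv
    rw [hv0, dotProduct_zero] at h
    exact lt_irrefl _ h
  have hZ1u : IsUnit Z1.det := by
    rw [isUnit_iff_ne_zero]
    intro hdet
    obtain ⟨v, hv, hv0⟩ := Matrix.exists_mulVec_eq_zero_iff.mpr hdet
    have hvne : (Sum.elim v (0 : Fin p → ℝ)) ≠ 0 := by
      intro h0
      apply hv
      funext i
      exact congrFun h0 (Sum.inl i)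
    have h := quadZ _ hvne
    rw [hZdef, Matrix.fromBlocks_mulVec] at h
    simp only [Sum.elim_comp_inl, Sum.elim_comp_inr, Matrix.mulVec_zero, add_zero] at h
    rw [sumElim_dotProduct_sumElim, zero_dotProduct, add_zero, hv0,
      dotProduct_zero] at h
    exact lt_irrefl _ h
  refine ⟨(Matrix.isUnit_iff_isUnit_det Z1).mpr hZ1u, ?_⟩
  intro σ hσ0 hσ1 x₀ x hx0 hxrec
  set Kb : Matrix (Fin 1) (Fin 3 ⊕ Fin p) ℝ :=
    Matrix.fromCols (Y * Z1⁻¹) (0 : Matrix (Fin 1) (Fin p) ℝ) with hKbdef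
  have hKZ : Kb * Z = Yb := by
    rw [hKbdef, hZdef, hYbdef, Matrix.fromCols_mul_fromBlocks]
    simp only [Matrix.mul_zero, Matrix.zero_mul, add_zero]
    rw [Matrix.mul_assoc, Matrix.nonsing_inv_mul _ hZ1u, Matrix.mul_one]
  -- the per-step Lyapunov inequality
  have key : ∀ (s : Fin r → ℝ), (∀ j, 0 ≤ s j) → (∑ j, s j) = 1 →
      ∀ y : Fin 3 ⊕ Fin p → ℝ,
      (((∑ j, s j • SM j) - (∑ j, s j • SH j) * Kb) *ᵥ y) ⬝ᵥ
        W⁻¹ *ᵥ (((∑ j, s j • SM j) - (∑ j, s j • SH j) * Kb) *ᵥ y) ≤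
        (1 - μ) * (y ⬝ᵥ W⁻¹ *ᵥ y) := by
    intro s hs hsum y
    have hconv := conv_posDef hLMI hs hsum
    have heq : (∑ j, s j • Matrix.fromBlocks (Z + Zᵀ - W)
        (Zᵀ * (SM j)ᵀ - Ybᵀ * (SH j)ᵀ) (SM j * Z - SH j * Yb) ((1 - μ) • W)) =
        Matrix.fromBlocks (Z + Zᵀ - W)
          (Zᵀ * (∑ j, s j • SM j)ᵀ - Ybᵀ * (∑ j, s j • SH j)ᵀ)
          ((∑ j, s j • SM j) * Z - (∑ j, s j • SH j) * Yb) ((1 - μ) • W) := by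
      simp_rw [Matrix.fromBlocks_smul]
      rw [sum_fromBlocks]
      have e11 : (∑ j, s j • (Z + Zᵀ - W)) = Z + Zᵀ - W := by
        rw [← Finset.sum_smul, hsum, one_smul]
      have e22 : (∑ j, s j • ((1 - μ) • W)) = (1 - μ) • W := by
        rw [← Finset.sum_smul, hsum, one_smul]
      have e12 : (∑ j, s j • (Zᵀ * (SM j)ᵀ - Ybᵀ * (SH j)ᵀ)) =
          Zᵀ * (∑ j, s j • SM j)ᵀ - Ybᵀ * (∑ j, s j • SH j)ᵀ := by
        simp_rw [smul_sub, ← Matrix.mul_smul, ← Matrix.transpose_smul]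
        rw [Finset.sum_sub_distrib, ← Matrix.mul_sum, ← Matrix.mul_sum,
          ← Matrix.transpose_sum, ← Matrix.transpose_sum]
      have e21 : (∑ j, s j • (SM j * Z - SH j * Yb)) =
          (∑ j, s j • SM j) * Z - (∑ j, s j • SH j) * Yb := by
        simp_rw [smul_sub, ← Matrix.smul_mul]
        rw [Finset.sum_sub_distrib, ← Matrix.sum_mul, ← Matrix.sum_mul]
      rw [e11, e22, e12, e21]
    rw [heq] at hconv
    exact key_step hW h1μ hZu hKZ hconv y
  have hdec : ∀ k, x (k + 1) ⬝ᵥ W⁻¹ *ᵥ x (k + 1) ≤ (1 - μ) * (x k ⬝ᵥ W⁻¹ *ᵥ x k) := by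
    intro k
    rw [hxrec k]
    exact key (σ k) (hσ0 k) (hσ1 k) (x k)
  obtain ⟨m, hm, hlow⟩ := quad_lower_bound hW.inv
  have hiter : ∀ k, x k ⬝ᵥ W⁻¹ *ᵥ x k ≤ (1 - μ) ^ k * (x₀ ⬝ᵥ W⁻¹ *ᵥ x₀) := by
    intro k
    induction k with
    | zero => simp [hx0]
    | succ k ih =>
      calc x (k + 1) ⬝ᵥ W⁻¹ *ᵥ x (k + 1) ≤ (1 - μ) * (x k ⬝ᵥ W⁻¹ *ᵥ x k) := hdec k
        _ ≤ (1 - μ) * ((1 - μ) ^ k * (x₀ ⬝ᵥ W⁻¹ *ᵥ x₀)) :=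
            mul_le_mul_of_nonneg_left ih h1μ.le
        _ = (1 - μ) ^ (k + 1) * (x₀ ⬝ᵥ W⁻¹ *ᵥ x₀) := by ring
  have hb : ∀ k, ‖x k‖ ^ 2 ≤ (1 - μ) ^ k * ((x₀ ⬝ᵥ W⁻¹ *ᵥ x₀) / m) := by
    intro k
    have h1 := hlow (x k)
    have h2 := hiter k
    have h3 : ‖x k‖ ^ 2 ≤ ((1 - μ) ^ k * (x₀ ⬝ᵥ W⁻¹ *ᵥ x₀)) / m :=
      (le_div_iff₀ hm).mpr (by linarith)
    calc ‖x k‖ ^ 2 ≤ ((1 - μ) ^ k * (x₀ ⬝ᵥ W⁻¹ *ᵥ x₀)) / m := h3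
      _ = (1 - μ) ^ k * ((x₀ ⬝ᵥ W⁻¹ *ᵥ x₀) / m) := by ring
  have hpow : Tendsto (fun k : ℕ => (1 - μ) ^ k * ((x₀ ⬝ᵥ W⁻¹ *ᵥ x₀) / m)) atTop (nhds 0) := by
    have h := tendsto_pow_atTop_nhds_zero_of_lt_one (by linarith : (0:ℝ) ≤ 1 - μ)
      (by linarith : 1 - μ < 1)
    simpa using h.mul_const ((x₀ ⬝ᵥ W⁻¹ *ᵥ x₀) / m)
  have hsq : Tendsto (fun k => ‖x k‖ ^ 2) atTop (nhds 0) :=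
    squeeze_zero (fun k => by positivity) hb hpow
  have hnorm : Tendsto (fun k => ‖x k‖) atTop (nhds 0) := by
    have h := (Real.continuous_sqrt.tendsto 0).comp hsq
    rw [Real.sqrt_zero] at h
    exact Filter.Tendsto.congr (fun k => Real.sqrt_sq (norm_nonneg _)) h
  exact tendsto_zero_iff_norm_tendsto_zero.mpr hnorm
end

section
/- Let ζ > 0, let v, a : ℝ → ℝ be differentiable functions with v(s) > 0 for all s, let v_ref : ℝ → ℝ be positive and twice differentiable, let û : ℝ → ℝ, and define the control input u(s) = a(s) + 3ζ·a(s)²/v(s) − ζ·v(s)⁴·((1/v_ref)″(s) + û(s)). Assume the disturbance-free spatial vehicle dynamics v′(s) = a(s)/v(s) and a′(s) = −a(s)/(ζ·v(s)) + u(s)/(ζ·v(s)) hold for all s. Define δ₁(s) = 1/v(s) − 1/v_ref(s) and δ₂(s) = δ₁′(s). Then δ₂ is differentiable and δ₂′(s) = û(s) for all s; that is, the error vector δ = (δ₁, δ₂) satisfies the linear dynamics δ′ = A·δ + B·û with A = [[0, 1], [0, 0]] and B = (0, 1)ᵀ. -/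
/-- Input–output linearization of the spatial-domain vehicle dynamics: the
feedback law `u` transforms the nonlinear dynamics into a double integrator in
the velocity tracking error coordinates `(δ₁, δ₂)` with virtual input `û`. -/
theorem stmt_12 (ζ : ℝ) (hζ : 0 < ζ) (v a vref uhat u : ℝ → ℝ)
    (hv : ∀ s, 0 < v s) (hvref : ∀ s, 0 < vref s) (hvrefC2 : ContDiff ℝ 2 vref)
    (hu : ∀ s, u s = a s + 3 * ζ * (a s) ^ 2 / v s
      - ζ * (v s) ^ 4 * (deriv (deriv fun t => 1 / vref t) s + uhat s))
    (hvdyn : ∀ s, HasDerivAt v (a s / v s) s)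
    (hadyn : ∀ s, HasDerivAt a (-(a s) / (ζ * v s) + u s / (ζ * v s)) s)
    (δ₁ δ₂ : ℝ → ℝ)
    (hδ₁ : δ₁ = fun s => 1 / v s - 1 / vref s)
    (hδ₂ : δ₂ = deriv δ₁) :
    ∀ s : ℝ, HasDerivAt δ₁ (δ₂ s) s ∧ HasDerivAt δ₂ (uhat s) s := by
  set f : ℝ → ℝ := fun t => 1 / vref t with hf
  have hfC2 : ContDiff ℝ 2 f := contDiff_const.div hvrefC2 (fun x => (hvref x).ne')
  have hfd : Differentiable ℝ f ∧ ContDiff ℝ 1 (deriv f) := by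
    rw [show ((2:WithTop ℕ∞)) = 1 + 1 by norm_num] at hfC2
    exact ⟨(contDiff_succ_iff_deriv.mp hfC2).1, (contDiff_succ_iff_deriv.mp hfC2).2.2⟩
  have hdf : ∀ s, HasDerivAt f (deriv f s) s := fun s => (hfd.1 s).hasDerivAt
  have hddf : ∀ s, HasDerivAt (deriv f) (deriv (deriv f) s) s := fun s =>
    ((hfd.2.differentiable one_ne_zero) s).hasDerivAt
  -- derivative of δ₁
  have h1 : ∀ s, HasDerivAt δ₁ (-(a s / v s) / v s ^ 2 - deriv f s) s := by
    intro s
    rw [hδ₁]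
    have hinv : HasDerivAt (fun s => 1 / v s) (-(a s / v s) / v s ^ 2) s := by
      simpa [one_div, Pi.inv_def] using (hvdyn s).inv (hv s).ne'
    exact hinv.sub (hdf s)
  have hδ₂eq : δ₂ = fun s => -(a s / v s / v s ^ 2) - deriv f s := by
    funext s; rw [hδ₂, (h1 s).deriv]; ring
  intro s
  have hvne := (hv s).ne'
  refine ⟨by rw [hδ₂eq]; simpa [neg_div] using h1 s, ?_⟩
  rw [hδ₂eq]
  have hnum : HasDerivAt (fun s => a s / v s)
      (((-(a s) / (ζ * v s) + u s / (ζ * v s)) * v s - a s * (a s / v s)) / v s ^ 2) s :=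
    (hadyn s).div (hvdyn s) hvne
  have hpow : HasDerivAt (fun s => v s ^ 2) (2 * v s ^ 1 * (a s / v s)) s := (hvdyn s).pow 2
  have h := ((hnum.div hpow (pow_ne_zero 2 hvne)).neg).sub (hddf s)
  have e : uhat s = -((((-a s / (ζ * v s) + u s / (ζ * v s)) * v s - a s * (a s / v s)) / v s ^ 2 * v s ^ 2 -
            a s / v s * (2 * v s ^ 1 * (a s / v s))) /
          (v s ^ 2) ^ 2) - deriv (deriv f) s := by
    rw [hu s]
    have hζne := hζ.ne'
    field_simp
    ring
  rw [e]
  exact h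
end

section
/- Let ε > 0 and 0 ≤ ε₀ < 1. Let Γ, Γ⁰ₚ, δ₁, δ₁ₚ, δ₁₀, δ₂, δ₂ₚ, δ₂₀, ū : ℝ → ℝ be differentiable functions satisfying δ₁′ = δ₂, δ₁ₚ′ = δ₂ₚ, δ₁₀′ = δ₂₀, Γ′ = δ₁ − δ₁ₚ, and (Γ⁰ₚ)′ = δ₁ₚ − δ₁₀, and suppose δ₂′(s) = −ε⁻¹(1−ε₀)(δ₂(s) − δ₂ₚ(s)) − ε⁻¹ε₀(δ₂(s) − δ₂₀(s)) + ū(s) for all s. Define Γ⁰ = Γ + Γ⁰ₚ, E₁ = (1−ε₀)·Γ + ε₀·Γ⁰ + ε·δ₁, E₂ = E₁′, and yₚ = −ε₀·Γ⁰ₚ − ε·δ₁ₚ. Then the state vector x = (Γ, E₁, E₂) satisfies the linear dynamics x′(s) = Ā₀·x(s) + B̄₁·ū(s) + B̄₂·yₚ(s) for all s, where Ā₀ = [[−ε⁻¹, ε⁻¹, 0], [0, 0, 1], [0, 0, 0]], B̄₁ = (0, 0, ε)ᵀ, and B̄₂ = (ε⁻¹, 0, 0)ᵀ. -/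
/-- The disturbance-free state-space platoon model in timing error coordinates
`x = (Γ, E₁, E₂)`: `x′ = Ā₀ x + B̄₁ ū + B̄₂ yₚ`. -/
theorem stmt_13 (ε ε₀ : ℝ) (hε : 0 < ε) (hε₀0 : 0 ≤ ε₀) (hε₀1 : ε₀ < 1)
    (Γ Γ0p δ₁ δ₁p δ₁0 δ₂ δ₂p δ₂0 ubar : ℝ → ℝ)
    (hδ₁ : ∀ s, HasDerivAt δ₁ (δ₂ s) s)
    (hδ₁p : ∀ s, HasDerivAt δ₁p (δ₂p s) s)
    (hδ₁0 : ∀ s, HasDerivAt δ₁0 (δ₂0 s) s)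
    (hΓ : ∀ s, HasDerivAt Γ (δ₁ s - δ₁p s) s)
    (hΓ0p : ∀ s, HasDerivAt Γ0p (δ₁p s - δ₁0 s) s)
    (hδ₂ : ∀ s, HasDerivAt δ₂
      (-ε⁻¹ * (1 - ε₀) * (δ₂ s - δ₂p s) - ε⁻¹ * ε₀ * (δ₂ s - δ₂0 s) + ubar s) s)
    (Γ0 E₁ E₂ yp : ℝ → ℝ)
    (hΓ0 : Γ0 = fun s => Γ s + Γ0p s)
    (hE₁ : E₁ = fun s => (1 - ε₀) * Γ s + ε₀ * Γ0 s + ε * δ₁ s)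
    (hE₂ : E₂ = deriv E₁)
    (hyp : yp = fun s => -ε₀ * Γ0p s - ε * δ₁p s)
    (x : ℝ → Fin 3 → ℝ) (hx : x = fun s => ![Γ s, E₁ s, E₂ s]) :
    ∀ s : ℝ, HasDerivAt x
      ((!![-ε⁻¹, ε⁻¹, 0; 0, 0, 1; 0, 0, 0] : Matrix (Fin 3) (Fin 3) ℝ).mulVec (x s)
        + ubar s • ![0, 0, ε] + yp s • ![ε⁻¹, 0, 0]) s := by
  have hεne : ε ≠ 0 := ne_of_gt hε
  have hE₁' : ∀ s, HasDerivAt E₁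
      (δ₁ s - δ₁p s + ε₀ * (δ₁p s - δ₁0 s) + ε * δ₂ s) s := by
    intro s
    subst hΓ0; subst hE₁
    have h : HasDerivAt (fun s => (1 - ε₀) * Γ s + ε₀ * (Γ s + Γ0p s) + ε * δ₁ s)
        ((1 - ε₀) * (δ₁ s - δ₁p s) + ε₀ * ((δ₁ s - δ₁p s) + (δ₁p s - δ₁0 s)) + ε * δ₂ s) s :=
      ((((hΓ s).const_mul (1 - ε₀)).add (((hΓ s).add (hΓ0p s)).const_mul ε₀)).add
        ((hδ₁ s).const_mul ε))
    convert h using 1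
    ring
  have hE₂eq : ∀ s, E₂ s = δ₁ s - δ₁p s + ε₀ * (δ₁p s - δ₁0 s) + ε * δ₂ s := by
    intro s; rw [hE₂]; exact (hE₁' s).deriv
  have hE₂fun : E₂ = fun s => δ₁ s - δ₁p s + ε₀ * (δ₁p s - δ₁0 s) + ε * δ₂ s :=
    funext hE₂eq
  have hE₂' : ∀ s, HasDerivAt E₂ (ε * ubar s) s := by
    intro s
    rw [hE₂fun]
    have h : HasDerivAt (fun s => δ₁ s - δ₁p s + ε₀ * (δ₁p s - δ₁0 s) + ε * δ₂ s)
        (δ₂ s - δ₂p s + ε₀ * (δ₂p s - δ₂0 s)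
          + ε * (-ε⁻¹ * (1 - ε₀) * (δ₂ s - δ₂p s) - ε⁻¹ * ε₀ * (δ₂ s - δ₂0 s) + ubar s)) s :=
      (((hδ₁ s).sub (hδ₁p s)).add (((hδ₁p s).sub (hδ₁0 s)).const_mul ε₀)).add
        ((hδ₂ s).const_mul ε)
    convert h using 1
    field_simp
    ring
  intro s
  rw [hx]
  have hmain : HasDerivAt (fun s => ![Γ s, E₁ s, E₂ s])
      (![δ₁ s - δ₁p s, E₂ s, ε * ubar s]) s := by
    rw [hasDerivAt_pi]
    intro i
    fin_cases i <;> simp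
    · exact hΓ s
    · rw [hE₂eq s]; exact hE₁' s
    · exact hE₂' s
  convert hmain using 1
  funext i
  fin_cases i <;>
    simp [Matrix.mulVec, dotProduct, Matrix.vecHead, Matrix.vecTail,
      Function.comp, hx, hyp, hE₁, hΓ0, hE₂eq s, Fin.sum_univ_three]
  all_goals (try field_simp)
  all_goals ring
end

section
/- Let p ≥ 1 and set N = 3 + p. Let r be a positive natural number and let S_{M,1}, …, S_{M,r} be real N×N matrices and S_{H,1}, …, S_{H,r} be real N×1 matrices; let C be a real 1×N matrix, 𝓛 a real N×1 matrix, and 𝓖 a real N×2 matrix. Suppose there exist a symmetric positive definite real N×N matrix 𝒲̃, a real 1×3 matrix 𝒴̃, an invertible real N×N matrix 𝒵̃ with block lower-triangular structure 𝒵̃ = [[𝒵̃₁, 0], [𝒵̃₂, 𝒵̃₃]] where 𝒵̃₁ is 3×3 and invertible, and scalars 0 < σ ≤ 1, γ > 0, 0 < a ≤ 1, b > 0, such that, setting K = 𝒴̃·𝒵̃₁⁻¹, K̄ = [K 0] ∈ ℝ^{1×N}, and Ω̃_j = (S_{M,j} − S_{H,j}·K̄)·𝒵̃, for each j ∈ {1,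 …, r} both block matrices [[a(𝒵̃ᵀ + 𝒵̃ − 𝒲̃), Ω̃_jᵀ, 0, 𝒵̃ᵀ·Cᵀ], [Ω̃_j, 𝒲̃, 𝓛, 0], [0, 𝓛ᵀ, bσ·I₁, 0], [C·𝒵̃, 0, 0, (1/b)·I₁]] and [[a(𝒵̃ᵀ + 𝒵̃ − 𝒲̃), Ω̃_jᵀ, 0, 𝒵̃ᵀ·Cᵀ], [Ω̃_j, 𝒲̃, 𝓖, 0], [0, 𝓖ᵀ, bγ·I₂, 0], [C·𝒵̃, 0, 0, (1/b)·I₁]] are positive semidefinite. Then for every sequence of weight vectors (σ(k))_{k∈ℕ} with σ_j(k) ≥ 0 and Σ_{j=1}^r σ_j(k) = 1 for all k, writing M_k = Σ_j σ_j(k)·S_{M,j} and H_k = Σ_j σ_j(k)·S_{H,j}: (i) for every sequence w : ℕ → ℝ, the solution of X_{k+1} = (M_k − H_k·K̄)·X_k + 𝓛·w_k with X₀ = 0 and output y_k = C·X_k satisfies Σ_{k=0}^{K−1} y_k² ≤ σ·Σ_{k=0}^{K−1} w_k² for every K ∈ ℕ; and (ii) for every sequence d : ℕ → ℝ², the solution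 of X_{k+1} = (M_k − H_k·K̄)·X_k + 𝓖·d_k with X₀ = 0 and output y_k = C·X_k satisfies Σ_{k=0}^{K−1} y_k² ≤ γ·Σ_{k=0}^{K−1} ‖d_k‖² for every K ∈ ℕ. -/
open Matrix Finset

section Auxiliary

lemma aux_dot_transpose_mulVec {n : Type*} [Fintype n] {m : Type*} [Fintype m]
    (u : n → ℝ) (v : m → ℝ) (M : Matrix m n ℝ) :
    u ⬝ᵥ (Mᵀ *ᵥ v) = (M *ᵥ u) ⬝ᵥ v := by
  rw [mulVec_transpose, dotProduct_comm (M *ᵥ u) v, dotProduct_mulVec, dotProduct_comm]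

/-- Key dissipation inequality extracted from the LMI. -/
lemma aux_dissip {n κ : Type*} [Fintype n] [DecidableEq n] [Fintype κ] [DecidableEq κ]
    (A W Z : Matrix n n ℝ) (B : Matrix n κ ℝ) (C : Matrix (Fin 1) n ℝ)
    (a b c : ℝ) (hW : W.PosDef) (hZ : IsUnit Z)
    (ha0 : 0 < a) (ha1 : a ≤ 1) (hb : 0 < b)
    (hQ : (Matrix.fromBlocks
      (Matrix.fromBlocks (a • (Zᵀ + Z - W)) (A * Z)ᵀ (A * Z) W)
      (Matrix.fromBlocks (0 : Matrix n κ ℝ) (Zᵀ * Cᵀ) B 0)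
      (Matrix.fromBlocks (0 : Matrix κ n ℝ) Bᵀ (C * Z) 0)
      (Matrix.fromBlocks ((b * c) • (1 : Matrix κ κ ℝ)) 0 0
        ((1 / b) • (1 : Matrix (Fin 1) (Fin 1) ℝ)))).PosSemidef)
    (x : n → ℝ) (w : κ → ℝ) :
    (A *ᵥ x + B *ᵥ w) ⬝ᵥ (W⁻¹ *ᵥ (A *ᵥ x + B *ᵥ w)) + b * (C.mulVec x 0) ^ 2
      ≤ x ⬝ᵥ (W⁻¹ *ᵥ x) + b * c * (w ⬝ᵥ w) := by
  have hWdet := (Matrix.isUnit_iff_isUnit_det W).mp hW.isUnit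
  have hWP : W * W⁻¹ = 1 := Matrix.mul_nonsing_inv _ hWdet
  have hPW : W⁻¹ * W = 1 := Matrix.nonsing_inv_mul _ hWdet
  have hWsymm : Wᵀ = W := by
    simpa [Matrix.conjTranspose_eq_transpose_of_trivial] using hW.isHermitian.eq
  have hPsymm : W⁻¹ᵀ = W⁻¹ := by
    rw [Matrix.transpose_nonsing_inv, hWsymm]
  have hZdet := (Matrix.isUnit_iff_isUnit_det Z).mp hZ
  set P := W⁻¹ with hPdef
  set u : n → ℝ := Z⁻¹ *ᵥ x with hu
  have hZu : Z *ᵥ u = x := by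
    rw [hu, Matrix.mulVec_mulVec, Matrix.mul_nonsing_inv _ hZdet, Matrix.one_mulVec]
  set x' : n → ℝ := A *ᵥ x + B *ᵥ w with hx'
  set y : ℝ := C.mulVec x 0 with hy
  set s : n → ℝ := -(P *ᵥ x') with hs
  set t : Fin 1 → ℝ := fun _ => -(b * y) with ht
  have hPpsd : P.PosSemidef := hW.inv.posSemidef
  have hxPx : 0 ≤ x ⬝ᵥ (P *ᵥ x) := by simpa using hPpsd.dotProduct_mulVec_nonneg x
  have hslack : u ⬝ᵥ ((Zᵀ + Z - W) *ᵥ u) ≤ x ⬝ᵥ (P *ᵥ x) := by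
    have hpsd2 : ((Z - W)ᵀ * P * (Z - W)).PosSemidef := by
      simpa [Matrix.conjTranspose_eq_transpose_of_trivial] using
        hPpsd.conjTranspose_mul_mul_same (Z - W)
    have h2 := hpsd2.dotProduct_mulVec_nonneg u
    simp only [star_trivial] at h2
    have hexp : (Z - W)ᵀ * P * (Z - W) = Zᵀ * P * Z - Zᵀ - Z + W := by
      have h1 : Wᵀ * P * Z = Z := by rw [hWsymm, hWP, Matrix.one_mul]
      have h2' : Zᵀ * P * W = Zᵀ := by rw [Matrix.mul_assoc, hPW, Matrix.mul_one]
      have h3 : Wᵀ * P * W = W := by rw [hWsymm, hWP, Matrix.one_mul]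
      rw [Matrix.transpose_sub, Matrix.sub_mul, Matrix.sub_mul, Matrix.mul_sub,
        Matrix.mul_sub, h1, h2', h3]
      abel
    have hquad : u ⬝ᵥ ((Zᵀ * P * Z) *ᵥ u) = x ⬝ᵥ (P *ᵥ x) := by
      rw [show Zᵀ * P * Z = Zᵀ * (P * Z) from by rw [Matrix.mul_assoc],
        ← Matrix.mulVec_mulVec, aux_dot_transpose_mulVec, Matrix.mulVec_mulVec,
        ← Matrix.mulVec_mulVec, hZu, ← Matrix.mulVec_mulVec, hZu]
    rw [hexp] at h2
    have : ((Zᵀ * P * Z - Zᵀ - Z + W) *ᵥ u) = (Zᵀ * P * Z) *ᵥ u - Zᵀ *ᵥ u - Z *ᵥ u + W *ᵥ u := by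
      simp [Matrix.sub_mulVec, Matrix.add_mulVec]
    rw [this, dotProduct_add, dotProduct_sub, dotProduct_sub, hquad] at h2
    have hthis2 : u ⬝ᵥ ((Zᵀ + Z - W) *ᵥ u) = u ⬝ᵥ (Zᵀ *ᵥ u) + u ⬝ᵥ (Z *ᵥ u) - u ⬝ᵥ (W *ᵥ u) := by
      simp [Matrix.sub_mulVec, Matrix.add_mulVec, dotProduct_add, dotProduct_sub]
    rw [hthis2]
    linarith
  have h0 := hQ.dotProduct_mulVec_nonneg (Sum.elim (Sum.elim u s) (Sum.elim w t))
  simp only [star_trivial, Matrix.fromBlocks_mulVec, sumElim_dotProduct_sumElim,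
    dotProduct_add, Matrix.zero_mulVec, dotProduct_zero, add_zero, zero_add,
    Matrix.smul_mulVec, dotProduct_smul, smul_eq_mul, Matrix.mulVec_mulVec,
    Sum.elim_comp_inl, Sum.elim_comp_inr, Matrix.one_mulVec] at h0
  have e1 : u ⬝ᵥ (A * Z)ᵀ *ᵥ s = (A *ᵥ x) ⬝ᵥ s := by
    rw [aux_dot_transpose_mulVec, ← Matrix.mulVec_mulVec, hZu]
  have e2 : s ⬝ᵥ (A * Z) *ᵥ u = (A *ᵥ x) ⬝ᵥ s := by
    rw [← Matrix.mulVec_mulVec, hZu, dotProduct_comm]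
  have e3 : s ⬝ᵥ W *ᵥ s = x' ⬝ᵥ P *ᵥ x' := by
    rw [hs, Matrix.mulVec_neg, dotProduct_neg, neg_dotProduct, neg_neg,
      Matrix.mulVec_mulVec, hWP, Matrix.one_mulVec, dotProduct_comm]
  have e4 : u ⬝ᵥ (Zᵀ * Cᵀ) *ᵥ t = -(b * (y * y)) := by
    rw [← Matrix.transpose_mul, aux_dot_transpose_mulVec, ← Matrix.mulVec_mulVec, hZu]
    simp [dotProduct, ht, hy]
    ring
  have e5 : w ⬝ᵥ Bᵀ *ᵥ s = (B *ᵥ w) ⬝ᵥ s := aux_dot_transpose_mulVec w s B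
  have e6 : t ⬝ᵥ (C * Z) *ᵥ u = -(b * (y * y)) := by
    rw [← Matrix.mulVec_mulVec, hZu]
    simp [dotProduct, ht, hy]
    ring
  have e7 : 1 / b * (t ⬝ᵥ t) = b * (y * y) := by
    simp [dotProduct, ht]
    field_simp
  have hsx : (A *ᵥ x) ⬝ᵥ s + (B *ᵥ w) ⬝ᵥ s = -(x' ⬝ᵥ P *ᵥ x') := by
    rw [← add_dotProduct, ← hx', hs, dotProduct_neg]
  have haq : a * (u ⬝ᵥ (Zᵀ + Z - W) *ᵥ u) ≤ x ⬝ᵥ P *ᵥ x := by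
    nlinarith [hslack, hxPx]
  rw [e1, e2, e3, e4, e5, e6, e7, dotProduct_comm s (B *ᵥ w),
    show y * y = y ^ 2 from (pow_two y).symm] at h0
  linarith [h0, haq, hsx]

/-- Positive semidefiniteness is preserved by nonnegative combinations. -/
lemma aux_psd_sum {ι n : Type*} [Fintype n] (s : Finset ι) (c : ι → ℝ)
    (Q : ι → Matrix n n ℝ) (hc : ∀ i ∈ s, 0 ≤ c i) (hQ : ∀ i ∈ s, (Q i).PosSemidef) :
    (∑ i ∈ s, c i • Q i).PosSemidef := by
  refine Matrix.PosSemidef.of_dotProduct_mulVec_nonneg ?_ ?_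
  · rw [Matrix.IsHermitian, conjTranspose_sum]
    exact Finset.sum_congr rfl fun i hi => by
      rw [Matrix.conjTranspose_smul, star_trivial, (hQ i hi).1.eq]
  · intro x
    rw [show (∑ i ∈ s, c i • Q i) *ᵥ x = ∑ i ∈ s, (c i • Q i) *ᵥ x from
      map_sum (Matrix.mulVec.addMonoidHomLeft x) _ s]
    rw [show star x ⬝ᵥ ∑ i ∈ s, (c i • Q i) *ᵥ x = ∑ i ∈ s, star x ⬝ᵥ ((c i • Q i) *ᵥ x) from by
      simp only [dotProduct, Finset.sum_apply, Finset.mul_sum]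
      rw [Finset.sum_comm]]
    refine Finset.sum_nonneg fun i hi => ?_
    rw [Matrix.smul_mulVec, dotProduct_smul, smul_eq_mul]
    exact mul_nonneg (hc i hi) (by simpa using (hQ i hi).dotProduct_mulVec_nonneg x)

lemma aux_telescope (V g h : ℕ → ℝ) (b c : ℝ) (hb : 0 < b)
    (hV0 : V 0 = 0) (hVpos : ∀ k, 0 ≤ V k)
    (hstep : ∀ k, V (k + 1) + b * g k ≤ V k + b * c * h k) :
    ∀ K, ∑ k ∈ Finset.range K, g k ≤ c * ∑ k ∈ Finset.range K, h k := by
  have key : ∀ K, V K + b * ∑ k ∈ Finset.range K, g k ≤ b * c * ∑ k ∈ Finset.range K, h k := by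
    intro K
    induction K with
    | zero => simp [hV0]
    | succ K ih =>
      rw [Finset.sum_range_succ, Finset.sum_range_succ]
      have := hstep K
      nlinarith [this, ih]
  intro K
  have := key K
  have h2 := hVpos K
  rw [show b * c * ∑ k ∈ Finset.range K, h k = b * (c * ∑ k ∈ Finset.range K, h k) by ring]
    at this
  have := (mul_le_mul_iff_right₀ hb).mp
    (by linarith : b * ∑ k ∈ Finset.range K, g k ≤ b * (c * ∑ k ∈ Finset.range K, h k))
  linarith

lemma aux_fromBlocks_convex {n κ ι : Type*} [Fintype n] [Fintype κ] [Fintype ι]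
    (s : Finset ι) (c : ι → ℝ) (hc : ∑ i ∈ s, c i = 1)
    (Ω : ι → Matrix n n ℝ) (M11 W : Matrix n n ℝ)
    (Q12 : Matrix (n ⊕ n) (κ ⊕ Fin 1) ℝ) (Q21 : Matrix (κ ⊕ Fin 1) (n ⊕ n) ℝ)
    (Q22 : Matrix (κ ⊕ Fin 1) (κ ⊕ Fin 1) ℝ) :
    Matrix.fromBlocks (Matrix.fromBlocks M11 (∑ i ∈ s, c i • Ω i)ᵀ (∑ i ∈ s, c i • Ω i) W)
        Q12 Q21 Q22
      = ∑ i ∈ s, c i • Matrix.fromBlocks (Matrix.fromBlocks M11 (Ω i)ᵀ (Ω i) W) Q12 Q21 Q22 := by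
  ext i l
  rcases i with (i | i) | i <;> rcases l with (l | l) | l <;>
    simp [Matrix.sum_apply, Matrix.smul_apply, smul_eq_mul, Matrix.transpose_apply,
      ← Finset.sum_mul, hc]

end Auxiliary

/-- Theorem 2: feasibility of the string-stability and disturbance-attenuation
LMIs at the vertices of the polytopic overapproximation yields a controller
gain `K = 𝒴̃ 𝒵̃₁⁻¹` guaranteeing ℓ₂ string stability with factor `σ` and
disturbance attenuation level `γ` for every admissible delay sequence. -/
theorem stmt_16 (p : ℕ) (hp : 1 ≤ p) (r : ℕ) (hr : 0 < r)
    (SM : Fin r → Matrix (Fin 3 ⊕ Fin p) (Fin 3 ⊕ Fin p) ℝ)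
    (SH : Fin r → Matrix (Fin 3 ⊕ Fin p) (Fin 1) ℝ)
    (C : Matrix (Fin 1) (Fin 3 ⊕ Fin p) ℝ)
    (L : Matrix (Fin 3 ⊕ Fin p) (Fin 1) ℝ)
    (G : Matrix (Fin 3 ⊕ Fin p) (Fin 2) ℝ)
    (W : Matrix (Fin 3 ⊕ Fin p) (Fin 3 ⊕ Fin p) ℝ) (hW : W.PosDef)
    (Y : Matrix (Fin 1) (Fin 3) ℝ)
    (Z1 : Matrix (Fin 3) (Fin 3) ℝ) (Z2 : Matrix (Fin p) (Fin 3) ℝ)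
    (Z3 : Matrix (Fin p) (Fin p) ℝ)
    (Z : Matrix (Fin 3 ⊕ Fin p) (Fin 3 ⊕ Fin p) ℝ)
    (hZ : Z = Matrix.fromBlocks Z1 0 Z2 Z3)
    (hZunit : IsUnit Z) (hZ1unit : IsUnit Z1)
    (σ γ a b : ℝ) (hσ0 : 0 < σ) (hσ1 : σ ≤ 1) (hγ : 0 < γ)
    (ha0 : 0 < a) (ha1 : a ≤ 1) (hb : 0 < b)
    (K : Matrix (Fin 1) (Fin 3) ℝ) (hK : K = Y * Z1⁻¹)
    (Kbar : Matrix (Fin 1) (Fin 3 ⊕ Fin p) ℝ)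
    (hKbar : Kbar = Matrix.fromCols K (0 : Matrix (Fin 1) (Fin p) ℝ))
    (Ω : Fin r → Matrix (Fin 3 ⊕ Fin p) (Fin 3 ⊕ Fin p) ℝ)
    (hΩ : ∀ j, Ω j = (SM j - SH j * Kbar) * Z)
    (hLMI1 : ∀ j, (Matrix.fromBlocks
      (Matrix.fromBlocks (a • (Zᵀ + Z - W)) (Ω j)ᵀ (Ω j) W)
      (Matrix.fromBlocks (0 : Matrix (Fin 3 ⊕ Fin p) (Fin 1) ℝ) (Zᵀ * Cᵀ) L 0)
      (Matrix.fromBlocks (0 : Matrix (Fin 1) (Fin 3 ⊕ Fin p) ℝ) Lᵀ (C * Z) 0)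
      (Matrix.fromBlocks ((b * σ) • (1 : Matrix (Fin 1) (Fin 1) ℝ)) 0 0
        ((1 / b) • (1 : Matrix (Fin 1) (Fin 1) ℝ)))).PosSemidef)
    (hLMI2 : ∀ j, (Matrix.fromBlocks
      (Matrix.fromBlocks (a • (Zᵀ + Z - W)) (Ω j)ᵀ (Ω j) W)
      (Matrix.fromBlocks (0 : Matrix (Fin 3 ⊕ Fin p) (Fin 2) ℝ) (Zᵀ * Cᵀ) G 0)
      (Matrix.fromBlocks (0 : Matrix (Fin 2) (Fin 3 ⊕ Fin p) ℝ) Gᵀ (C * Z) 0)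
      (Matrix.fromBlocks ((b * γ) • (1 : Matrix (Fin 2) (Fin 2) ℝ)) 0 0
        ((1 / b) • (1 : Matrix (Fin 1) (Fin 1) ℝ)))).PosSemidef) :
    ∀ σs : ℕ → Fin r → ℝ, (∀ k j, 0 ≤ σs k j) → (∀ k, (∑ j, σs k j) = 1) →
    ((∀ w : ℕ → ℝ, ∀ X : ℕ → Fin 3 ⊕ Fin p → ℝ, X 0 = 0 →
      (∀ k, X (k + 1) =
        ((∑ j, σs k j • SM j) - (∑ j, σs k j • SH j) * Kbar).mulVec (X k)
          + L.mulVec ![w k]) →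
      ∀ K' : ℕ, ∑ k ∈ Finset.range K', (C.mulVec (X k) 0) ^ 2
        ≤ σ * ∑ k ∈ Finset.range K', (w k) ^ 2)
    ∧
    (∀ d : ℕ → EuclideanSpace ℝ (Fin 2), ∀ X : ℕ → Fin 3 ⊕ Fin p → ℝ, X 0 = 0 →
      (∀ k, X (k + 1) =
        ((∑ j, σs k j • SM j) - (∑ j, σs k j • SH j) * Kbar).mulVec (X k)
          + G.mulVec (d k)) →
      ∀ K' : ℕ, ∑ k ∈ Finset.range K', (C.mulVec (X k) 0) ^ 2
        ≤ γ * ∑ k ∈ Finset.range K', ‖d k‖ ^ 2)) := by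
  intro σs hσnn hσsum
  set A : ℕ → Matrix (Fin 3 ⊕ Fin p) (Fin 3 ⊕ Fin p) ℝ :=
    fun k => (∑ j, σs k j • SM j) - (∑ j, σs k j • SH j) * Kbar with hA
  have hAZ : ∀ k, A k * Z = ∑ j, σs k j • Ω j := by
    intro k
    simp only [hA, hΩ, Matrix.sub_mul, smul_sub, Finset.sum_sub_distrib, Finset.sum_mul,
      smul_mul_assoc, Matrix.mul_assoc]
    rw [Matrix.sum_mul]
    simp only [Matrix.smul_mul]
  have hPpsd : (W⁻¹).PosSemidef := hW.inv.posSemidef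
  have hVpos : ∀ v : Fin 3 ⊕ Fin p → ℝ, 0 ≤ v ⬝ᵥ (W⁻¹ *ᵥ v) := fun v => by
    simpa using hPpsd.dotProduct_mulVec_nonneg v
  constructor
  · -- string stability
    intro w X hX0 hXrec K'
    have hPSD : ∀ k, (Matrix.fromBlocks
        (Matrix.fromBlocks (a • (Zᵀ + Z - W)) (A k * Z)ᵀ (A k * Z) W)
        (Matrix.fromBlocks (0 : Matrix (Fin 3 ⊕ Fin p) (Fin 1) ℝ) (Zᵀ * Cᵀ) L 0)
        (Matrix.fromBlocks (0 : Matrix (Fin 1) (Fin 3 ⊕ Fin p) ℝ) Lᵀ (C * Z) 0)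
        (Matrix.fromBlocks ((b * σ) • (1 : Matrix (Fin 1) (Fin 1) ℝ)) 0 0
          ((1 / b) • (1 : Matrix (Fin 1) (Fin 1) ℝ)))).PosSemidef := by
      intro k
      rw [hAZ k, aux_fromBlocks_convex Finset.univ (σs k) (hσsum k) Ω]
      exact aux_psd_sum _ _ _ (fun j _ => hσnn k j) (fun j _ => hLMI1 j)
    have hstep : ∀ k,
        X (k + 1) ⬝ᵥ (W⁻¹ *ᵥ X (k + 1)) + b * (C.mulVec (X k) 0) ^ 2
          ≤ X k ⬝ᵥ (W⁻¹ *ᵥ X k) + b * σ * (w k) ^ 2 := by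
      intro k
      have hd := aux_dissip (A k) W Z L C a b σ hW hZunit ha0 ha1 hb (hPSD k) (X k) ![w k]
      rw [← hXrec k] at hd
      have : (![w k] : Fin 1 → ℝ) ⬝ᵥ ![w k] = (w k) ^ 2 := by
        simp [dotProduct, pow_two]
      rwa [this] at hd
    have := aux_telescope (fun k => X k ⬝ᵥ (W⁻¹ *ᵥ X k))
      (fun k => (C.mulVec (X k) 0) ^ 2) (fun k => (w k) ^ 2) b σ hb
      (by simp [hX0]) (fun k => hVpos (X k)) hstep K'
    exact this
  · -- disturbance attenuation
    intro d X hX0 hXrec K'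
    have hPSD : ∀ k, (Matrix.fromBlocks
        (Matrix.fromBlocks (a • (Zᵀ + Z - W)) (A k * Z)ᵀ (A k * Z) W)
        (Matrix.fromBlocks (0 : Matrix (Fin 3 ⊕ Fin p) (Fin 2) ℝ) (Zᵀ * Cᵀ) G 0)
        (Matrix.fromBlocks (0 : Matrix (Fin 2) (Fin 3 ⊕ Fin p) ℝ) Gᵀ (C * Z) 0)
        (Matrix.fromBlocks ((b * γ) • (1 : Matrix (Fin 2) (Fin 2) ℝ)) 0 0
          ((1 / b) • (1 : Matrix (Fin 1) (Fin 1) ℝ)))).PosSemidef := by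
      intro k
      rw [hAZ k, aux_fromBlocks_convex Finset.univ (σs k) (hσsum k) Ω]
      exact aux_psd_sum _ _ _ (fun j _ => hσnn k j) (fun j _ => hLMI2 j)
    have hstep : ∀ k,
        X (k + 1) ⬝ᵥ (W⁻¹ *ᵥ X (k + 1)) + b * (C.mulVec (X k) 0) ^ 2
          ≤ X k ⬝ᵥ (W⁻¹ *ᵥ X k) + b * γ * ‖d k‖ ^ 2 := by
      intro k
      have hd := aux_dissip (A k) W Z G C a b γ hW hZunit ha0 ha1 hb (hPSD k) (X k) (d k)
      rw [← hXrec k] at hd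
      have : ((d k : Fin 2 → ℝ)) ⬝ᵥ (d k) = ‖d k‖ ^ 2 := by
        rw [← real_inner_self_eq_norm_sq]
        simp [PiLp.inner_apply, dotProduct, mul_comm]
        rw [EuclideanSpace.norm_eq, Real.sq_sqrt (by positivity)]
        simp [Fin.sum_univ_two, sq_abs, pow_two]
      rwa [this] at hd
    exact aux_telescope (fun k => X k ⬝ᵥ (W⁻¹ *ᵥ X k))
      (fun k => (C.mulVec (X k) 0) ^ 2) (fun k => ‖d k‖ ^ 2) b γ hb
      (by simp [hX0]) (fun k => hVpos (X k)) hstep K'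
end
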